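/- Let (L,·) be a loop, A(L) a subgroup of its automorphism group, and H(L) the A(L)-holomorph of (L,·). If H(L) is an Osborn loop, then for every x ∈ L and all α, φ ∈ A(L), the triples (y ↦ y·a, z ↦ a\z, I) are autotopisms of (L,·), both for a = α(x)·x^ρ and for a = x^λ·φ⁻¹(x); equivalently, (y·a)·(a\z) = y·z for all y, z ∈ L for each such a. -/

import Mathlib

/-- A loop: a set with multiplication, left and right division, and a
two-sided identity element, such that all translations are bijections
(expressed via the division operations). -/
structure Loop (L : Type*) where
  mul : L → L → L
  ldiv : L → L → L
  rdiv : L → L → L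
  e : L
  mul_ldiv : ∀ x y, mul x (ldiv x y) = y
  ldiv_mul : ∀ x y, ldiv x (mul x y) = y
  rdiv_mul : ∀ x y, mul (rdiv y x) x = y
  mul_rdiv : ∀ x y, rdiv (mul y x) x = y
  e_mul : ∀ x, mul e x = x
  mul_e : ∀ x, mul x e = x

namespace Loop

variable {L : Type*} (Q : Loop L)

/-- The left inverse `x^λ`, the unique element with `x^λ · x = e`. -/
def linv (x : L) : L := Q.rdiv Q.e x

/-- The right inverse `x^ρ`, the unique element with `x · x^ρ = e`. -/
def rinv (x : L) : L := Q.ldiv x Q.e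

/-- A loop is Osborn if `x·((y·z)·x) = (x·((y·x^λ)·x))·(z·x)` for all `x,y,z`. -/
def IsOsborn : Prop :=
  ∀ x y z, Q.mul x (Q.mul (Q.mul y z) x) =
    Q.mul (Q.mul x (Q.mul (Q.mul y (Q.linv x)) x)) (Q.mul z x)

/-- The automorphism group of a loop, as a subgroup of the permutation group. -/
def autGroup : Subgroup (Equiv.Perm L) where
  carrier := {α | ∀ x y, α (Q.mul x y) = Q.mul (α x) (α y)}
  one_mem' := fun _ _ => rfl
  mul_mem' := by
    intro α β ha hb x y
    simp only [Equiv.Perm.mul_apply]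
    rw [hb x y, ha]
  inv_mem' := by
    intro α ha x y
    apply α.injective
    rw [ha]
    simp

theorem mem_autGroup_iff {α : Equiv.Perm L} :
    α ∈ Q.autGroup ↔ ∀ x y, α (Q.mul x y) = Q.mul (α x) (α y) := Iff.rfl

theorem aut_fix_e {α : Equiv.Perm L} (hα : α ∈ Q.autGroup) : α Q.e = Q.e := by
  have h1 : α (Q.mul Q.e Q.e) = Q.mul (α Q.e) (α Q.e) := hα Q.e Q.e
  rw [Q.mul_e] at h1
  have h2 : Q.mul (α Q.e) (α Q.e) = Q.mul (α Q.e) Q.e := by rw [Q.mul_e, ← h1]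
  have h3 := congrArg (Q.ldiv (α Q.e)) h2
  rwa [Q.ldiv_mul, Q.ldiv_mul] at h3

/-- The `A`-holomorph of a loop `(L,·)`: the loop on `A × L` with multiplication
`(α,x)∘(β,y) = (α∘β, β(x)·y)`, where `A` is a subgroup of the automorphism group. -/
def Holomorph (A : Subgroup (Equiv.Perm L)) (hA : A ≤ Q.autGroup) : Loop (A × L) where
  mul p q := (p.1 * q.1, Q.mul ((q.1 : Equiv.Perm L) p.2) q.2)
  ldiv p r := (p.1⁻¹ * r.1, Q.ldiv (((p.1⁻¹ * r.1 : A) : Equiv.Perm L) p.2) r.2)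
  rdiv r q := (r.1 * q.1⁻¹, ((q.1⁻¹ : A) : Equiv.Perm L) (Q.rdiv r.2 q.2))
  e := (1, Q.e)
  mul_ldiv p r := by
    refine Prod.ext ?_ ?_
    · simp
    · simp [Q.mul_ldiv]
  ldiv_mul p q := by
    refine Prod.ext ?_ ?_
    · simp
    · simp [inv_mul_cancel_left, Q.ldiv_mul]
  rdiv_mul r q := by
    refine Prod.ext ?_ ?_
    · simp
    · simp [Q.rdiv_mul]
  mul_rdiv p q := by
    refine Prod.ext ?_ ?_
    · simp
    · simp [Q.mul_rdiv]
  e_mul p := by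
    refine Prod.ext ?_ ?_
    · simp
    · simp [Q.aut_fix_e (hA p.1.2), Q.e_mul]
  mul_e p := by
    refine Prod.ext ?_ ?_
    · simp
    · simp [Q.mul_e]

/-- A triple `(A,B,C)` of bijections of `L` is an autotopism of `(L,·)` if
`A(x)·B(y) = C(x·y)` for all `x, y`. -/
def IsAutotopism (A B C : L → L) : Prop :=
  Function.Bijective A ∧ Function.Bijective B ∧ Function.Bijective C ∧
    ∀ x y, Q.mul (A x) (B y) = C (Q.mul x y)

/-- A bijection `U` is ρ-regular if `(I,U,U)` is an autotopism. -/
def IsRhoRegular (U : L → L) : Prop := Q.IsAutotopism id U U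

/-- A bijection `U` is λ-regular if `(U,I,U)` is an autotopism. -/
def IsLambdaRegular (U : L → L) : Prop := Q.IsAutotopism U id U

/-- `U'` is an adjoint of the bijection `U` if `(U, U'⁻¹, I)` is an autotopism. -/
def IsMuAdjoint (U U' : L → L) : Prop :=
  letI : Nonempty L := ⟨Q.e⟩
  Function.Bijective U' ∧ Q.IsAutotopism U (Function.invFun U') id

/-- `U` is μ-regular if it has an adjoint, i.e. `(U, U'⁻¹, I)` is an
autotopism for some bijection `U'`. The μ-regular bijections form `Φ(L,·)`. -/
def IsMuRegular (U : L → L) : Prop := ∃ U', Q.IsMuAdjoint U U'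

/-- `U'` belongs to `Ψ(L,·)`, the group of adjoints of μ-regular bijections. -/
def IsPsi (U' : L → L) : Prop := ∃ U, Q.IsMuAdjoint U U'

/-- Membership in the left nucleus `N_λ`. -/
def InNlambda (a : L) : Prop := ∀ y z, Q.mul a (Q.mul y z) = Q.mul (Q.mul a y) z

/-- Membership in the middle nucleus `N_μ`. -/
def InNmu (a : L) : Prop := ∀ y z, Q.mul (Q.mul y a) z = Q.mul y (Q.mul a z)

/-- Membership in the right nucleus `N_ρ`. -/
def InNrho (a : L) : Prop := ∀ y z, Q.mul (Q.mul y z) a = Q.mul y (Q.mul z a)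

/-- Membership in the nucleus `N = N_λ ∩ N_μ ∩ N_ρ`. -/
def InNucleus (a : L) : Prop := Q.InNlambda a ∧ Q.InNmu a ∧ Q.InNrho a

/-- Membership in the center `Z = N ∩ C`. -/
def InCenter (a : L) : Prop := Q.InNucleus a ∧ ∀ x, Q.mul a x = Q.mul x a

end Loop

namespace Loop

variable {L : Type*} (Q : Loop L)

theorem mul_right_cancel' {p p' q : L} (h : Q.mul p q = Q.mul p' q) : p = p' := by
  have h2 := congrArg (fun t => Q.rdiv t q) h
  simpa only [Q.mul_rdiv] using h2

theorem mul_left_cancel' {p q q' : L} (h : Q.mul p q = Q.mul p q') : q = q' := by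
  have h2 := congrArg (fun t => Q.ldiv p t) h
  simpa only [Q.ldiv_mul] using h2

theorem linv_mul (x : L) : Q.mul (Q.linv x) x = Q.e := Q.rdiv_mul x Q.e
theorem mul_rinv (x : L) : Q.mul x (Q.rinv x) = Q.e := Q.mul_ldiv x Q.e

theorem rinv_linv (x : L) : Q.rinv (Q.linv x) = x :=
  Q.mul_left_cancel' (p := Q.linv x) (by rw [Q.mul_rinv, Q.linv_mul])

variable {Q} {A : Subgroup (Equiv.Perm L)}

theorem aut_mul' (hA : A ≤ Q.autGroup) (α : A) (x y : L) :
    (α : Equiv.Perm L) (Q.mul x y) = Q.mul ((α : Equiv.Perm L) x) ((α : Equiv.Perm L) y) :=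
  hA α.2 x y

theorem aut_e' (hA : A ≤ Q.autGroup) (α : A) : (α : Equiv.Perm L) Q.e = Q.e :=
  Q.aut_fix_e (hA α.2)

theorem aut_rinv (hA : A ≤ Q.autGroup) (α : A) (x : L) :
    (α : Equiv.Perm L) (Q.rinv x) = Q.rinv ((α : Equiv.Perm L) x) :=
  Q.mul_left_cancel' (p := (α : Equiv.Perm L) x)
    (by rw [Q.mul_rinv, ← aut_mul' hA, Q.mul_rinv, aut_e' hA])

theorem aut_linv (hA : A ≤ Q.autGroup) (α : A) (x : L) :
    (α : Equiv.Perm L) (Q.linv x) = Q.linv ((α : Equiv.Perm L) x) :=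
  Q.mul_right_cancel' (q := (α : Equiv.Perm L) x)
    (by rw [Q.linv_mul, ← aut_mul' hA, Q.linv_mul, aut_e' hA])

/-- The second-coordinate consequence of the Osborn identity in the holomorph. -/
theorem holo_star (hA : A ≤ Q.autGroup) (hO : (Q.Holomorph A hA).IsOsborn) (α β γ : A)
    (x y z : L) :
    Q.mul ((β : Equiv.Perm L) ((γ : Equiv.Perm L) ((α : Equiv.Perm L) x)))
        (Q.mul (Q.mul ((α : Equiv.Perm L) ((γ : Equiv.Perm L) y)) ((α : Equiv.Perm L) z)) x)
      = Q.mul (Q.mul ((γ : Equiv.Perm L) ((α : Equiv.Perm L) ((β : Equiv.Perm L) x)))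
            (Q.mul (Q.mul ((γ : Equiv.Perm L) ((α : Equiv.Perm L) y))
              ((γ : Equiv.Perm L) ((α : Equiv.Perm L) (Q.linv x))))
              ((γ : Equiv.Perm L) ((α : Equiv.Perm L) x))))
          (Q.mul ((α : Equiv.Perm L) z) x) := by
  unfold Loop.IsOsborn at hO
  have h := hO (α, x) (β, y) (γ, z)
  simp only [Loop.Holomorph, Loop.linv, Prod.mk.injEq, one_mul, MulMemClass.coe_mul,
    Equiv.Perm.mul_apply, InvMemClass.coe_inv, Equiv.Perm.coe_inv, Equiv.apply_symm_apply,
    Equiv.symm_apply_apply, aut_mul' hA] at h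
  exact h.2

/-- The key identity (G): `α(x)·((u·v)·x) = (α(x)·((u·x^λ)·x))·(v·x)`. -/
theorem regG (hA : A ≤ Q.autGroup) (hO : (Q.Holomorph A hA).IsOsborn) (α : A) (u v x : L) :
    Q.mul ((α : Equiv.Perm L) x) (Q.mul (Q.mul u v) x)
      = Q.mul (Q.mul ((α : Equiv.Perm L) x) (Q.mul (Q.mul u (Q.linv x)) x)) (Q.mul v x) := by
  have h := holo_star hA hO α α α⁻¹ x u (((α⁻¹ : A) : Equiv.Perm L) v)
  simpa only [InvMemClass.coe_inv, Equiv.Perm.coe_inv, Equiv.apply_symm_apply, Equiv.symm_apply_apply] using h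

/-- Identity (H): `(α(x)·s)·t = α(x)·(x\((x·s)·t))`. -/
theorem regH (hA : A ≤ Q.autGroup) (hO : (Q.Holomorph A hA).IsOsborn) (α : A) (x s t : L) :
    Q.mul (Q.mul ((α : Equiv.Perm L) x) s) t
      = Q.mul ((α : Equiv.Perm L) x) (Q.ldiv x (Q.mul (Q.mul x s) t)) := by
  have hg := regG hA hO α (Q.rdiv (Q.rdiv s x) (Q.linv x)) (Q.rdiv t x) x
  have h1 := regG hA hO 1 (Q.rdiv (Q.rdiv s x) (Q.linv x)) (Q.rdiv t x) x
  simp only [Q.rdiv_mul] at hg h1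
  simp only [OneMemClass.coe_one, Equiv.Perm.one_apply] at h1
  have key : Q.mul (Q.mul (Q.rdiv (Q.rdiv s x) (Q.linv x)) (Q.rdiv t x)) x
      = Q.ldiv x (Q.mul (Q.mul x s) t) := by
    have h2 := congrArg (Q.ldiv x) h1
    rwa [Q.ldiv_mul] at h2
  rw [key] at hg
  exact hg.symm

/-- Identity (J): with `a = α(x)·x^ρ`, `a·t = α(x)·(x\t)`. -/
theorem regJ (hA : A ≤ Q.autGroup) (hO : (Q.Holomorph A hA).IsOsborn) (α : A) (x t : L) :
    Q.mul (Q.mul ((α : Equiv.Perm L) x) (Q.rinv x)) t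
      = Q.mul ((α : Equiv.Perm L) x) (Q.ldiv x t) := by
  have h := regH hA hO α x (Q.rinv x) t
  rwa [Q.mul_rinv, Q.e_mul] at h

/-- `a = α(x)·x^ρ` lies in the left nucleus. -/
theorem regNl (hA : A ≤ Q.autGroup) (hO : (Q.Holomorph A hA).IsOsborn) (α : A) (x s t : L) :
    Q.mul (Q.mul ((α : Equiv.Perm L) x) (Q.rinv x)) (Q.mul s t)
      = Q.mul (Q.mul (Q.mul ((α : Equiv.Perm L) x) (Q.rinv x)) s) t := by
  rw [regJ hA hO α x (Q.mul s t), regJ hA hO α x s, regH hA hO α x (Q.ldiv x s) t, Q.mul_ldiv]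

/-- `a = α(x)·x^ρ` lies in the middle nucleus. -/
theorem regNmu (hA : A ≤ Q.autGroup) (hO : (Q.Holomorph A hA).IsOsborn) (α : A) (x w t : L) :
    Q.mul (Q.mul w (Q.mul ((α : Equiv.Perm L) x) (Q.rinv x))) t
      = Q.mul w (Q.mul (Q.mul ((α : Equiv.Perm L) x) (Q.rinv x)) t) := by
  set a := Q.mul ((α : Equiv.Perm L) x) (Q.rinv x) with ha
  have h := regG hA hO 1 a (Q.rdiv t w) w
  simp only [OneMemClass.coe_one, Equiv.Perm.one_apply, Q.rdiv_mul] at h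
  have h2 : Q.mul (Q.mul a (Q.linv w)) w = a := by
    rw [← regNl hA hO α x (Q.linv w) w, Q.linv_mul, Q.mul_e]
  have h3 : Q.mul (Q.mul a (Q.rdiv t w)) w = Q.mul a t := by
    rw [← regNl hA hO α x (Q.rdiv t w) w, Q.rdiv_mul]
  rw [h2, h3] at h
  exact h.symm

/-- The autotopism conclusion for `a = α(x)·x^ρ`. -/
theorem key_aut (hA : A ≤ Q.autGroup) (hO : (Q.Holomorph A hA).IsOsborn) (α : A) (x : L) :
    (Q.IsAutotopism (fun y => Q.mul y (Q.mul ((α : Equiv.Perm L) x) (Q.rinv x)))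
      (fun z => Q.ldiv (Q.mul ((α : Equiv.Perm L) x) (Q.rinv x)) z) id ∧
    ∀ y z, Q.mul (Q.mul y (Q.mul ((α : Equiv.Perm L) x) (Q.rinv x)))
        (Q.ldiv (Q.mul ((α : Equiv.Perm L) x) (Q.rinv x)) z) = Q.mul y z) := by
  set a := Q.mul ((α : Equiv.Perm L) x) (Q.rinv x) with ha
  have heq : ∀ y z, Q.mul (Q.mul y a) (Q.ldiv a z) = Q.mul y z := by
    intro y z
    rw [regNmu hA hO α x, Q.mul_ldiv]
  refine ⟨⟨?_, ?_, Function.bijective_id, fun y z => heq y z⟩, heq⟩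
  · exact Function.bijective_iff_has_inverse.mpr
      ⟨fun t => Q.rdiv t a, fun y => Q.mul_rdiv a y, fun t => Q.rdiv_mul a t⟩
  · exact Function.bijective_iff_has_inverse.mpr
      ⟨fun t => Q.mul a t, fun z => Q.mul_ldiv a z, fun t => Q.ldiv_mul a t⟩

end Loop

/-- If `H(L)` is an Osborn loop, then for every `x ∈ L` and all
`α, φ ∈ A(L)`, the triples `(y ↦ y·a, z ↦ a\z, I)` are autotopisms of `(L,·)`,
both for `a = α(x)·x^ρ` and for `a = x^λ·φ⁻¹(x)`; equivalently,
`(y·a)·(a\z) = y·z` for all `y, z ∈ L` for each such `a`. -/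
theorem holomorph_osborn_mu_autotopisms {L : Type*} (Q : Loop L)
    (A : Subgroup (Equiv.Perm L)) (hA : A ≤ Q.autGroup) :
    (Q.Holomorph A hA).IsOsborn →
      ∀ (x : L) (α φ : A),
        (Q.IsAutotopism (fun y => Q.mul y (Q.mul ((α : Equiv.Perm L) x) (Q.rinv x))) (fun z => Q.ldiv (Q.mul ((α : Equiv.Perm L) x) (Q.rinv x)) z) id ∧
          ∀ y z, Q.mul (Q.mul y (Q.mul ((α : Equiv.Perm L) x) (Q.rinv x))) (Q.ldiv (Q.mul ((α : Equiv.Perm L) x) (Q.rinv x)) z) = Q.mul y z) ∧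
        (Q.IsAutotopism (fun y => Q.mul y (Q.mul (Q.linv x) (((φ⁻¹ : A) : Equiv.Perm L) x))) (fun z => Q.ldiv (Q.mul (Q.linv x) (((φ⁻¹ : A) : Equiv.Perm L) x)) z) id ∧
          ∀ y z, Q.mul (Q.mul y (Q.mul (Q.linv x) (((φ⁻¹ : A) : Equiv.Perm L) x))) (Q.ldiv (Q.mul (Q.linv x) (((φ⁻¹ : A) : Equiv.Perm L) x)) z) = Q.mul y z) := by
  intro hO x α φ
  refine ⟨Loop.key_aut hA hO α x, ?_⟩
  have hx1 : (φ : Equiv.Perm L) (((φ⁻¹ : A) : Equiv.Perm L) (Q.linv x)) = Q.linv x := by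
    simp
  have hx2 : Q.rinv (((φ⁻¹ : A) : Equiv.Perm L) (Q.linv x)) = ((φ⁻¹ : A) : Equiv.Perm L) x := by
    rw [← Loop.aut_rinv hA φ⁻¹ (Q.linv x), Q.rinv_linv]
  have h := Loop.key_aut hA hO φ (((φ⁻¹ : A) : Equiv.Perm L) (Q.linv x))
  rw [hx1, hx2] at h
  exact h
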